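/- Let R be a commutative ring, g : ℕ → R, and let m ≥ 1 and h ≥ 1 be integers. Then Σ_{w : Fin m → ℕ, all w_j ≥ 1, Σ_j w_j = h} ∏_{j=1}^{m} g(w_j) = Σ_{ν : Fin h → ℕ (indexed by k = 1,…,h), Σ_k k·ν_k = h and Σ_k ν_k = m} (m! / ∏_{k=1}^{h} ν_k!) · ∏_{k=1}^{h} g(k)^(ν_k), where m! / ∏_k ν_k! is the (integer) multinomial coefficient, cast into R. -/

import Mathlib

open Finset Polynomial

private lemma prod_image_succ {M : Type*} [CommMonoid M] (h : ℕ) (F : ℕ → M) :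
    ∏ i ∈ (Finset.range h).image (· + 1), F i = ∏ j : Fin h, F ((j : ℕ) + 1) := by
  rw [Finset.prod_image (fun a _ b _ hab => by omega)]
  exact (Fin.prod_univ_eq_prod_range (fun i => F (i + 1)) h).symm

private lemma sum_image_succ (h : ℕ) (F : ℕ → ℕ) :
    ∑ i ∈ (Finset.range h).image (· + 1), F i = ∑ j : Fin h, F ((j : ℕ) + 1) := by
  rw [Finset.sum_image (fun a _ b _ hab => by omega)]
  exact (Fin.sum_univ_eq_sum_range (fun i => F (i + 1)) h).symm

/-- Second combinatorial reduction step of the paper: a sum over ordered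
compositions of `h` into exactly `m` positive parts equals a sum over unordered
partitions of `h` into exactly `m` positive parts (encoded by multiplicities
`ν_k` of each part `k ∈ {1,…,h}`), weighted by the multinomial coefficient
`m! / (ν_1! ⋯ ν_h!)`. -/
theorem partition_reduction {R : Type*} [CommRing R] (g : ℕ → R)
    (m h : ℕ) (hm : 1 ≤ m) (hh : 1 ≤ h) :
    ∑ w ∈ (Finset.Nat.antidiagonalTuple m h).filter (fun w => ∀ j, 1 ≤ w j),
        ∏ j : Fin m, g (w j)
    = ∑ ν ∈ (Fintype.piFinset fun _ : Fin h => Finset.range (h + 1)) |>.filter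
          (fun ν : Fin h → ℕ =>
            ∑ k : Fin h, ((k : ℕ) + 1) * ν k = h ∧ ∑ k : Fin h, ν k = m),
        ((Nat.factorial m / ∏ k : Fin h, Nat.factorial (ν k) : ℕ) : R) *
          ∏ k : Fin h, g ((k : ℕ) + 1) ^ (ν k) := by
  classical
  set s : Finset ℕ := (Finset.range h).image (· + 1) with hs
  have hmem : ∀ i, i ∈ s ↔ 1 ≤ i ∧ i ≤ h := by
    intro i; simp only [hs, Finset.mem_image, Finset.mem_range]; constructor
    · rintro ⟨a, ha, rfl⟩; omega
    · rintro ⟨h1, h2⟩; exact ⟨i - 1, by omega, by omega⟩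
  -- the two expansions of the same power
  have key : (∑ w ∈ Fintype.piFinset (fun _ : Fin m => s),
        ∏ j : Fin m, (C (g (w j)) * X ^ (w j) : Polynomial R))
      = ∑ k ∈ piAntidiag s m,
          (Nat.multinomial s k : Polynomial R) * ∏ i ∈ s, (C (g i) * X ^ i) ^ k i := by
    have e1 : (∑ i ∈ s, (C (g i) * X ^ i : Polynomial R)) ^ m
        = ∑ w ∈ Fintype.piFinset (fun _ : Fin m => s),
            ∏ j : Fin m, (C (g (w j)) * X ^ (w j) : Polynomial R) := by
      calc (∑ i ∈ s, (C (g i) * X ^ i : Polynomial R)) ^ m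
          = ∏ _j : Fin m, (∑ i ∈ s, (C (g i) * X ^ i : Polynomial R)) := by
            rw [Finset.prod_const, Finset.card_univ, Fintype.card_fin]
        _ = _ := Finset.prod_univ_sum (fun _ : Fin m => s)
              (fun _ y => (C (g y) * X ^ y : Polynomial R))
    rw [← e1, Finset.sum_pow_eq_sum_piAntidiag]
  -- take the coefficient of X^h on both sides
  have hcoeff := congrArg (fun p : Polynomial R => p.coeff h) key
  simp only [finset_sum_coeff] at hcoeff
  -- left side of hcoeff
  have hL : ∀ w : Fin m → ℕ,
      (∏ j : Fin m, (C (g (w j)) * X ^ (w j) : Polynomial R)).coeff h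
        = if ∑ j, w j = h then ∏ j, g (w j) else 0 := by
    intro w
    rw [Finset.prod_mul_distrib, ← map_prod, Finset.prod_pow_eq_pow_sum, coeff_C_mul,
      coeff_X_pow]
    by_cases hw : ∑ j, w j = h
    · simp [hw]
    · simp [hw, Ne.symm hw]
  have hR : ∀ k : ℕ → ℕ,
      ((Nat.multinomial s k : Polynomial R) * ∏ i ∈ s, (C (g i) * X ^ i) ^ k i).coeff h
        = if ∑ i ∈ s, i * k i = h then
            (Nat.multinomial s k : R) * ∏ i ∈ s, g i ^ k i else 0 := by
    intro k
    simp_rw [mul_pow, ← C_pow, ← pow_mul]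
    rw [Finset.prod_mul_distrib, ← map_prod, Finset.prod_pow_eq_pow_sum, ← C_eq_natCast,
      ← mul_assoc, ← C_mul, coeff_C_mul, coeff_X_pow]
    by_cases hk : ∑ i ∈ s, i * k i = h
    · simp [hk]
    · simp [hk, Ne.symm hk]
  simp only [hL, hR, Finset.sum_ite_eq, ← Finset.sum_filter] at hcoeff
  -- identify the left filtered set with the theorem's LHS index set
  have hset : (Fintype.piFinset fun _ : Fin m => s).filter (fun w => ∑ j, w j = h)
      = (Finset.Nat.antidiagonalTuple m h).filter (fun w => ∀ j, 1 ≤ w j) := by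
    ext w
    simp only [Finset.mem_filter, Fintype.mem_piFinset, Finset.Nat.mem_antidiagonalTuple, hmem]
    constructor
    · rintro ⟨hw, hsum⟩; exact ⟨hsum, fun j => (hw j).1⟩
    · rintro ⟨hsum, hpos⟩
      refine ⟨fun j => ⟨hpos j, ?_⟩, hsum⟩
      calc w j ≤ ∑ i, w i := Finset.single_le_sum (fun i _ => Nat.zero_le _) (mem_univ j)
        _ = h := hsum
  rw [hset] at hcoeff
  rw [hcoeff]
  -- now reindex the partition side
  refine Finset.sum_nbij' (fun k => fun j : Fin h => k ((j : ℕ) + 1))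
    (fun ν => fun i : ℕ => if hi : 1 ≤ i ∧ i ≤ h then ν ⟨i - 1, by omega⟩ else 0)
    ?_ ?_ ?_ ?_ ?_
  · -- maps to
    intro k hk
    simp only [Finset.mem_filter, mem_piAntidiag] at hk
    obtain ⟨⟨hksum, hksupp⟩, hkh⟩ := hk
    rw [sum_image_succ h (fun i => i * k i)] at hkh
    rw [sum_image_succ h k] at hksum
    simp only [Finset.mem_filter, Fintype.mem_piFinset, Finset.mem_range]
    refine ⟨fun j => ?_, hkh, hksum⟩
    have h1 : k ((j : ℕ) + 1) ≤ ((j : ℕ) + 1) * k ((j : ℕ) + 1) :=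
      Nat.le_mul_of_pos_left _ (by omega)
    have h2 : ((j : ℕ) + 1) * k ((j : ℕ) + 1) ≤ ∑ j : Fin h, ((j : ℕ) + 1) * k ((j : ℕ) + 1) :=
      Finset.single_le_sum (f := fun j : Fin h => ((j : ℕ) + 1) * k ((j : ℕ) + 1))
        (fun i _ => Nat.zero_le _) (mem_univ j)
    omega
  · -- maps back
    intro ν hν
    simp only [Finset.mem_filter, Fintype.mem_piFinset, Finset.mem_range] at hν
    obtain ⟨hνmem, hν1, hν2⟩ := hν
    have heval : ∀ j : Fin h,
        (if hi : 1 ≤ (j : ℕ) + 1 ∧ (j : ℕ) + 1 ≤ h then ν ⟨(j : ℕ) + 1 - 1, by omega⟩ else 0)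
          = ν j := by
      intro j
      rw [dif_pos ⟨by omega, j.isLt⟩]
      exact congrArg ν (Fin.ext (by simp))
    simp only [Finset.mem_filter, mem_piAntidiag]
    refine ⟨⟨?_, ?_⟩, ?_⟩
    · rw [sum_image_succ h (fun i =>
        if hi : 1 ≤ i ∧ i ≤ h then ν ⟨i - 1, by omega⟩ else 0)]
      simp only [heval]
      exact hν2
    · intro i hi
      by_contra hns
      rw [dif_neg (fun hc => hns ((hmem i).mpr hc))] at hi
      exact hi rfl
    · rw [sum_image_succ h (fun i =>
        i * if hi : 1 ≤ i ∧ i ≤ h then ν ⟨i - 1, by omega⟩ else 0)]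
      simp only [heval]
      exact hν1
  · -- left inverse
    intro k hk
    simp only [Finset.mem_filter, mem_piAntidiag] at hk
    funext i
    dsimp only
    by_cases hi : 1 ≤ i ∧ i ≤ h
    · rw [dif_pos hi]
      exact congrArg k (by omega)
    · rw [dif_neg hi]
      by_contra hne
      have : i ∈ s := hk.1.2 i (fun hc => hne hc.symm)
      exact hi ((hmem i).mp this)
  · -- right inverse
    intro ν hν
    funext j
    dsimp only
    rw [dif_pos ⟨by omega, j.isLt⟩]
    exact congrArg ν (Fin.ext (by simp))
  · -- values agree
    intro k hk
    simp only [Finset.mem_filter, mem_piAntidiag] at hk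
    obtain ⟨⟨hksum, hksupp⟩, hkh⟩ := hk
    have hmult : Nat.multinomial s k = m.factorial / ∏ j : Fin h, (k ((j : ℕ) + 1)).factorial := by
      rw [Nat.multinomial, hksum, prod_image_succ h (fun i => (k i).factorial)]
    dsimp only
    rw [hmult, prod_image_succ h (fun i => g i ^ k i)]
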